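/- For every u ≥ 1, the partition P_u = (6u+5, 2u+1 | 2u, 2u-2, ..., 4, 2, -1, -3, ..., -2u+3, -2u+1 | -2u-1, -6u-3) of type (2, 2u, 2) is Ulrich. -/

import Mathlib

/-- A list of integers is strictly decreasing. -/
def StrictDec (l : List ℤ) : Prop := l.Chain' (· > ·)

/-- Time evolution of a three-block partition `(A | B | C)`: subtract `t` from each entry of
the first block, keep the middle block fixed, add `t` to each entry of the last block. -/
def evolve3 (A B C : List ℤ) (t : ℤ) : List ℤ := A.map (· - t) ++ B ++ C.map (· + t)

/-- A list has exactly one repeated entry: the number of distinct values is one less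
than the length. -/
def OneRepeat (l : List ℤ) : Prop := l.toFinset.card + 1 = l.length

/-- The dimension of a three-block partition of type `(α, β, γ)` is `αβ + αγ + βγ`. -/
def dim3 (A B C : List ℤ) : ℕ := A.length * B.length + A.length * C.length + B.length * C.length

/-- A three-block partition is Ulrich: it is a strictly decreasing sequence (with nonempty
outer blocks), and for every time `t ∈ {1, ..., N}` (N the dimension) the evolved list `P(t)`
has exactly one repeated entry. -/
def IsUlrich3 (A B C : List ℤ) : Prop :=
  A ≠ [] ∧ C ≠ [] ∧ StrictDec (evolve3 A B C 0) ∧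
    ∀ t : ℕ, 1 ≤ t → t ≤ dim3 A B C → OneRepeat (evolve3 A B C (t : ℤ))
/-- The middle block of `P_u`: the positive even numbers `2u, 2u-2, ..., 2` followed by the
negative odd numbers `-1, -3, ..., -(2u-1)`. -/
def Bu (u : ℕ) : List ℤ :=
  ((List.range u).map (fun i => 2 * ((u : ℤ) - i))) ++
    ((List.range u).map (fun i => -(2 * (i : ℤ) + 1)))

/-- The first block of `P_u`. -/
def PuA (u : ℕ) : List ℤ := [6 * (u : ℤ) + 5, 2 * (u : ℤ) + 1]

/-- The last block of `P_u`. -/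
def PuC (u : ℕ) : List ℤ := [-2 * (u : ℤ) - 1, -6 * (u : ℤ) - 3]

lemma Bu_eq (u : ℕ) : Bu u =
    ((List.range u).map (fun i : ℕ => 2 * ((u:ℤ) - (i:ℤ)))) ++
    ((List.range u).map (fun i : ℕ => -(2 * (i:ℤ) + 1))) := by
  simp [Bu, ← List.map_eq_flatMap, List.map_map, Function.comp_def]

/-- Arithmetic characterization of membership in `Bu u`. -/
def InB (u : ℕ) (x : ℤ) : Prop :=
  (2 ∣ x ∧ 2 ≤ x ∧ x ≤ 2 * (u : ℤ)) ∨ (¬ (2 ∣ x) ∧ -(2 * (u : ℤ)) ≤ x ∧ x ≤ -1)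

lemma mem_Bu {u : ℕ} {x : ℤ} : x ∈ Bu u ↔ InB u x := by
  rw [Bu_eq]
  constructor
  · intro h
    rcases List.mem_append.mp h with h | h
    · obtain ⟨i, hi, rfl⟩ := List.mem_map.mp h
      have hi' := List.mem_range.mp hi
      exact Or.inl (by omega)
    · obtain ⟨i, hi, rfl⟩ := List.mem_map.mp h
      have hi' := List.mem_range.mp hi
      exact Or.inr (by omega)
  · rintro (⟨h1, h2, h3⟩ | ⟨h1, h2, h3⟩)
    · exact List.mem_append.mpr (Or.inl (List.mem_map.mpr
        ⟨(2 * (u : ℤ) - x).toNat / 2, List.mem_range.mpr (by omega), by omega⟩))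
    · exact List.mem_append.mpr (Or.inr (List.mem_map.mpr
        ⟨(-x - 1).toNat / 2, List.mem_range.mpr (by omega), by omega⟩))

lemma pairwise_Bu (u : ℕ) : (Bu u).Pairwise (· > ·) := by
  rw [Bu_eq, List.pairwise_append]
  refine ⟨?_, ?_, ?_⟩
  · rw [List.pairwise_map]
    exact (List.pairwise_lt_range (n := u)).imp (by intro a b h; omega)
  · rw [List.pairwise_map]
    exact (List.pairwise_lt_range (n := u)).imp (by intro a b h; omega)
  · intro x hx y hy
    simp only [List.mem_map, List.mem_range] at hx hy
    obtain ⟨i, hi, rfl⟩ := hx; obtain ⟨j, hj, rfl⟩ := hy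
    omega

lemma nodup_Bu (u : ℕ) : (Bu u).Nodup :=
  (pairwise_Bu u).imp (fun h => ne_of_gt h)

lemma length_Bu (u : ℕ) : (Bu u).length = 2 * u := by
  rw [Bu_eq]; simp [two_mul]

lemma oneRepeat_cons (x : ℤ) (l : List ℤ) (hx : x ∈ l) (hl : l.Nodup) :
    OneRepeat (x :: l) := by
  unfold OneRepeat
  rw [List.toFinset_cons, Finset.insert_eq_self.mpr (List.mem_toFinset.mpr hx),
    List.toFinset_card_of_nodup hl]
  simp

lemma oneRepeat_perm {l l' : List ℤ} (h : l.Perm l') (h2 : OneRepeat l) : OneRepeat l' := by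
  unfold OneRepeat at *
  rw [← List.toFinset_eq_of_perm _ _ h, ← h.length_eq]; exact h2

lemma nodup_aux1 (u : ℕ) (x c1 c2 : ℤ) (hx : ¬ InB u x) (h3 : ¬ InB u c1)
    (h4 : ¬ InB u c2) (h5 : x ≠ c1) (h6 : x ≠ c2) (h7 : c1 ≠ c2) :
    (x :: (Bu u ++ [c1, c2])).Nodup := by
  refine List.Nodup.cons ?_ (List.nodup_append.mpr ⟨nodup_Bu u, by simp [h7], ?_⟩)
  · intro hmem
    rcases List.mem_append.mp hmem with h | h
    · exact hx (mem_Bu.mp h)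
    · simp only [List.mem_cons, List.not_mem_nil, or_false] at h
      rcases h with rfl | rfl
      · exact h5 rfl
      · exact h6 rfl
  · intro a ha b hb hab; subst hab
    simp only [List.mem_cons, List.not_mem_nil, or_false] at hb
    rcases hb with rfl | rfl
    · exact h3 (mem_Bu.mp ha)
    · exact h4 (mem_Bu.mp ha)

lemma nodup_aux2 (u : ℕ) (a1 a2 c : ℤ) (h1 : ¬ InB u a1) (h2 : ¬ InB u a2)
    (h3 : ¬ InB u c) (h4 : a1 ≠ a2) (h5 : a1 ≠ c) (h6 : a2 ≠ c) :
    (a1 :: a2 :: (Bu u ++ [c])).Nodup := by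
  refine List.Nodup.cons ?_ (List.Nodup.cons ?_
    (List.nodup_append.mpr ⟨nodup_Bu u, by simp, ?_⟩))
  · intro hmem
    rcases List.mem_cons.mp hmem with h | hmem
    · exact h4 h
    rcases List.mem_append.mp hmem with h | h
    · exact h1 (mem_Bu.mp h)
    · simp only [List.mem_cons, List.not_mem_nil, or_false] at h
      exact h5 h
  · intro hmem
    rcases List.mem_append.mp hmem with h | h
    · exact h2 (mem_Bu.mp h)
    · simp only [List.mem_cons, List.not_mem_nil, or_false] at h
      exact h6 h
  · intro a ha b hb hab; subst hab
    simp only [List.mem_cons, List.not_mem_nil, or_false] at hb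
    subst hb
    exact h3 (mem_Bu.mp ha)

lemma case_a1 (u : ℕ) (a1 a2 c1 c2 : ℤ)
    (h1 : InB u a1 ∨ a1 = a2 ∨ a1 = c1 ∨ a1 = c2)
    (h2 : ¬ InB u a2) (h3 : ¬ InB u c1) (h4 : ¬ InB u c2)
    (h5 : a2 ≠ c1) (h6 : a2 ≠ c2) (h7 : c1 ≠ c2) :
    OneRepeat (a1 :: a2 :: (Bu u ++ [c1, c2])) := by
  refine oneRepeat_cons _ _ ?_ (nodup_aux1 u a2 c1 c2 h2 h3 h4 h5 h6 h7)
  rcases h1 with h1 | rfl | rfl | rfl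
  · exact List.mem_cons.mpr (Or.inr (List.mem_append.mpr (Or.inl (mem_Bu.mpr h1))))
  · exact List.mem_cons_self
  · exact List.mem_cons.mpr (Or.inr (List.mem_append.mpr (Or.inr (by simp))))
  · exact List.mem_cons.mpr (Or.inr (List.mem_append.mpr (Or.inr (by simp))))

lemma case_a2 (u : ℕ) (a1 a2 c1 c2 : ℤ)
    (h1 : InB u a2 ∨ a2 = c1 ∨ a2 = c2)
    (h2 : ¬ InB u a1) (h3 : ¬ InB u c1) (h4 : ¬ InB u c2)
    (h5 : a1 ≠ c1) (h6 : a1 ≠ c2) (h7 : c1 ≠ c2) :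
    OneRepeat (a1 :: a2 :: (Bu u ++ [c1, c2])) := by
  refine oneRepeat_perm (List.Perm.swap a1 a2 _) ?_
  refine oneRepeat_cons _ _ ?_ (nodup_aux1 u a1 c1 c2 h2 h3 h4 h5 h6 h7)
  rcases h1 with h1 | rfl | rfl
  · exact List.mem_cons.mpr (Or.inr (List.mem_append.mpr (Or.inl (mem_Bu.mpr h1))))
  · exact List.mem_cons.mpr (Or.inr (List.mem_append.mpr (Or.inr (by simp))))
  · exact List.mem_cons.mpr (Or.inr (List.mem_append.mpr (Or.inr (by simp))))

lemma case_c1 (u : ℕ) (a1 a2 c1 c2 : ℤ)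
    (h1 : InB u c1 ∨ c1 = a1 ∨ c1 = a2 ∨ c1 = c2)
    (h2 : ¬ InB u a1) (h3 : ¬ InB u a2) (h4 : ¬ InB u c2)
    (h5 : a1 ≠ a2) (h6 : a1 ≠ c2) (h7 : a2 ≠ c2) :
    OneRepeat (a1 :: a2 :: (Bu u ++ [c1, c2])) := by
  refine oneRepeat_perm
    ((List.perm_middle (a := c1) (l₁ := a1 :: a2 :: Bu u) (l₂ := [c2])).symm) ?_
  refine oneRepeat_cons _ _ ?_ (nodup_aux2 u a1 a2 c2 h2 h3 h4 h5 h6 h7)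
  rcases h1 with h1 | rfl | rfl | rfl
  · exact List.mem_cons.mpr (Or.inr (List.mem_cons.mpr (Or.inr
      (List.mem_append.mpr (Or.inl (mem_Bu.mpr h1))))))
  · exact List.mem_cons_self
  · exact List.mem_cons.mpr (Or.inr (List.mem_cons_self))
  · exact List.mem_cons.mpr (Or.inr (List.mem_cons.mpr (Or.inr
      (List.mem_append.mpr (Or.inr (by simp))))))

lemma case_c2 (u : ℕ) (a1 a2 c1 c2 : ℤ)
    (h1 : InB u c2 ∨ c2 = a1 ∨ c2 = a2 ∨ c2 = c1)
    (h2 : ¬ InB u a1) (h3 : ¬ InB u a2) (h4 : ¬ InB u c1)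
    (h5 : a1 ≠ a2) (h6 : a1 ≠ c1) (h7 : a2 ≠ c1) :
    OneRepeat (a1 :: a2 :: (Bu u ++ [c1, c2])) := by
  have e : a1 :: a2 :: (Bu u ++ [c1, c2]) = (a1 :: a2 :: (Bu u ++ [c1])) ++ [c2] := by
    simp
  rw [e]
  refine oneRepeat_perm (List.perm_append_singleton c2 _).symm ?_
  refine oneRepeat_cons _ _ ?_ (nodup_aux2 u a1 a2 c1 h2 h3 h4 h5 h6 h7)
  rcases h1 with h1 | rfl | rfl | rfl
  · exact List.mem_cons.mpr (Or.inr (List.mem_cons.mpr (Or.inr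
      (List.mem_append.mpr (Or.inl (mem_Bu.mpr h1))))))
  · exact List.mem_cons_self
  · exact List.mem_cons.mpr (Or.inr (List.mem_cons_self))
  · exact List.mem_cons.mpr (Or.inr (List.mem_cons.mpr (Or.inr
      (List.mem_append.mpr (Or.inr (by simp))))))

/-- For every `u ≥ 1`, the partition
`P_u = (6u+5, 2u+1 | 2u, ..., 2, -1, ..., -2u+1 | -2u-1, -6u-3)` of type `(2, 2u, 2)`
is Ulrich. -/
theorem stmt15 (u : ℕ) (hu : 1 ≤ u) : IsUlrich3 (PuA u) (Bu u) (PuC u) := by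
  have hu' : (1 : ℤ) ≤ (u : ℤ) := by exact_mod_cast hu
  refine ⟨by simp [PuA], by simp [PuC], ?_, ?_⟩
  · unfold StrictDec
    refine List.isChain_iff_pairwise.mpr ?_
    have hE : evolve3 (PuA u) (Bu u) (PuC u) 0 =
        (6 * (u : ℤ) + 5) :: (2 * (u : ℤ) + 1) ::
          (Bu u ++ [-2 * (u : ℤ) - 1, -6 * (u : ℤ) - 3]) := by
      simp [evolve3, PuA, PuC]
    rw [hE]
    have hCC : List.Pairwise (fun x1 x2 : ℤ => x1 > x2)
        [-2 * (u : ℤ) - 1, -6 * (u : ℤ) - 3] :=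
      List.Pairwise.cons
        (by intro y hy; simp only [List.mem_cons, List.not_mem_nil, or_false] at hy
            subst hy; omega)
        (by simp)
    refine List.Pairwise.cons ?_ (List.Pairwise.cons ?_ (List.pairwise_append.mpr
      ⟨pairwise_Bu u, hCC, ?_⟩))
    · intro b hb
      simp only [List.mem_cons, List.mem_append, List.not_mem_nil, or_false, mem_Bu, InB] at hb
      omega
    · intro b hb
      simp only [List.mem_cons, List.mem_append, List.not_mem_nil, or_false, mem_Bu, InB] at hb
      omega
    · intro x hx y hy
      have := mem_Bu.mp hx
      simp only [InB] at this
      simp only [List.mem_cons, List.not_mem_nil, or_false] at hy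
      rcases hy with rfl | rfl <;> omega
  · intro t ht1 ht2
    have hdim : dim3 (PuA u) (Bu u) (PuC u) = 8 * u + 4 := by
      simp [dim3, PuA, PuC, length_Bu]; ring
    rw [hdim] at ht2
    have hT1 : (1 : ℤ) ≤ (t : ℤ) := by exact_mod_cast ht1
    have hT2 : (t : ℤ) ≤ 8 * (u : ℤ) + 4 := by exact_mod_cast ht2
    have hE : evolve3 (PuA u) (Bu u) (PuC u) (t : ℤ) =
        (6 * (u : ℤ) + 5 - t) :: (2 * (u : ℤ) + 1 - t) ::
          (Bu u ++ [-2 * (u : ℤ) - 1 + t, -6 * (u : ℤ) - 3 + t]) := by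
      simp [evolve3, PuA, PuC]
    rw [hE]
    rcases Int.even_or_odd (t : ℤ) with ⟨k, hk⟩ | ⟨k, hk⟩
    · -- t even
      by_cases hr1 : (t : ℤ) ≤ 2 * u
      · refine case_c1 u _ _ _ _ ?_ ?_ ?_ ?_ ?_ ?_ ?_ <;> (try simp only [InB]) <;> omega
      · by_cases hr2 : (t : ℤ) ≤ 4 * u + 2
        · refine case_a2 u _ _ _ _ ?_ ?_ ?_ ?_ ?_ ?_ ?_ <;> (try simp only [InB]) <;> omega
        · by_cases hr3 : (t : ℤ) ≤ 6 * u + 2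
          · refine case_c2 u _ _ _ _ ?_ ?_ ?_ ?_ ?_ ?_ ?_ <;> (try simp only [InB]) <;> omega
          · refine case_a1 u _ _ _ _ ?_ ?_ ?_ ?_ ?_ ?_ ?_ <;> (try simp only [InB]) <;> omega
    · -- t odd
      by_cases hr1 : (t : ℤ) ≤ 2 * u + 1
      · refine case_a2 u _ _ _ _ ?_ ?_ ?_ ?_ ?_ ?_ ?_ <;> (try simp only [InB]) <;> omega
      · by_cases hr2 : (t : ℤ) ≤ 4 * u + 1
        · refine case_c1 u _ _ _ _ ?_ ?_ ?_ ?_ ?_ ?_ ?_ <;> (try simp only [InB]) <;> omega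
        · by_cases hr3 : (t : ℤ) ≤ 6 * u + 3
          · refine case_a1 u _ _ _ _ ?_ ?_ ?_ ?_ ?_ ?_ ?_ <;> (try simp only [InB]) <;> omega
          · refine case_c2 u _ _ _ _ ?_ ?_ ?_ ?_ ?_ ?_ ?_ <;> (try simp only [InB]) <;> omega
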